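/- The average $\langle Q\rangle_u(x) = \frac{1}{4}(Q(x) + Q(x\cdot i) + Q(x\cdot j) + Q(x\cdot k))$ of a quadratic form $Q$ on a right $\mathbb{H}$-vector space $V$ is invariant under the right action of $SU(2)$: for every unit quaternion $L$ and every $x\in V$, $\langle Q\rangle_u(x\cdot L) = \langle Q\rangle_u(x)$. -/

import Mathlib

set_option maxHeartbeats 1000000

/-- The quaternion units `i`, `j`, `k`. -/
noncomputable def qi : Quaternion ℝ := ⟨0, 1, 0, 0⟩
noncomputable def qj : Quaternion ℝ := ⟨0, 0, 1, 0⟩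
noncomputable def qk : Quaternion ℝ := ⟨0, 0, 0, 1⟩

/-- The average `⟨Q⟩_u(x) = (1/4)(Q(x) + Q(x·i) + Q(x·j) + Q(x·k))` of a quadratic form `Q`
on a right quaternionic vector space `V` is invariant under the right action of `SU(2)`:
for every unit quaternion `L` and every `x`, `⟨Q⟩_u(x·L) = ⟨Q⟩_u(x)`.
The right action of a quaternion `q` on `V` is `MulOpposite.op q • x`. -/
theorem average_invariant_under_SU2
    (V : Type*) [AddCommGroup V] [Module ℝ V] [Module (Quaternion ℝ)ᵐᵒᵖ V]
    [IsScalarTower ℝ (Quaternion ℝ)ᵐᵒᵖ V]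
    (Q : QuadraticForm ℝ V)
    (avg : V → ℝ)
    (havg : avg = fun x => (1 / 4) * (Q x + Q (MulOpposite.op qi • x)
        + Q (MulOpposite.op qj • x) + Q (MulOpposite.op qk • x)))
    (L : Quaternion ℝ) (hL : ‖L‖ = 1) (x : V) :
    avg (MulOpposite.op L • x) = avg x := by
  subst havg
  have hn : L.re ^ 2 + L.imI ^ 2 + L.imJ ^ 2 + L.imK ^ 2 = 1 := by
    have h1 : Quaternion.normSq L = 1 := by
      rw [Quaternion.normSq_eq_norm_mul_self, hL]; ring
    simpa [Quaternion.normSq_def'] using h1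
  set B := QuadraticMap.associated (R := ℝ) Q with hB
  have hQ : ∀ v, Q v = B v v := fun v =>
    (QuadraticMap.associated_eq_self_apply ℝ Q v).symm
  have key : ∀ q : Quaternion ℝ, (MulOpposite.op q) • x
      = q.re • x + q.imI • (MulOpposite.op qi • x) + q.imJ • (MulOpposite.op qj • x)
        + q.imK • (MulOpposite.op qk • x) := by
    intro q
    have hq : q = q.re • (1 : Quaternion ℝ) + q.imI • qi + q.imJ • qj + q.imK • qk := by
      ext <;> simp [Quaternion.re_one, Quaternion.imI_one, Quaternion.imJ_one,
        Quaternion.imK_one, Quaternion.re_smul, Quaternion.imI_smul, Quaternion.imJ_smul,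
        Quaternion.imK_smul] <;> simp [qi, qj, qk]
    conv_lhs => rw [hq]
    simp only [MulOpposite.op_add, MulOpposite.op_smul, add_smul, smul_assoc,
      MulOpposite.op_one, one_smul]
  set v0 := x
  set v1 := MulOpposite.op qi • x
  set v2 := MulOpposite.op qj • x
  set v3 := MulOpposite.op qk • x
  set a := L.re; set b := L.imI; set c := L.imJ; set d := L.imK
  have e0 : MulOpposite.op L • x = a • v0 + b • v1 + c • v2 + d • v3 := key L
  have e1 : MulOpposite.op qi • (MulOpposite.op L • x)
      = (-b) • v0 + a • v1 + d • v2 + (-c) • v3 := by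
    rw [smul_smul, ← MulOpposite.op_mul]
    have : L * qi = ⟨-b, a, d, -c⟩ := by
      ext <;> simp [Quaternion.re_mul, Quaternion.imI_mul, Quaternion.imJ_mul,
        Quaternion.imK_mul] <;> simp [qi] <;> rfl
    rw [this]; exact key _
  have e2 : MulOpposite.op qj • (MulOpposite.op L • x)
      = (-c) • v0 + (-d) • v1 + a • v2 + b • v3 := by
    rw [smul_smul, ← MulOpposite.op_mul]
    have : L * qj = ⟨-c, -d, a, b⟩ := by
      ext <;> simp [Quaternion.re_mul, Quaternion.imI_mul, Quaternion.imJ_mul,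
        Quaternion.imK_mul] <;> simp [qj] <;> rfl
    rw [this]; exact key _
  have e3 : MulOpposite.op qk • (MulOpposite.op L • x)
      = (-d) • v0 + c • v1 + (-b) • v2 + a • v3 := by
    rw [smul_smul, ← MulOpposite.op_mul]
    have : L * qk = ⟨-d, c, -b, a⟩ := by
      ext <;> simp [Quaternion.re_mul, Quaternion.imI_mul, Quaternion.imJ_mul,
        Quaternion.imK_mul] <;> simp [qk] <;> rfl
    rw [this]; exact key _
  have hsymm := QuadraticMap.associated_isSymm ℝ Q
  have s01 : B v1 v0 = B v0 v1 := hsymm v1 v0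
  have s02 : B v2 v0 = B v0 v2 := hsymm v2 v0
  have s03 : B v3 v0 = B v0 v3 := hsymm v3 v0
  have s12 : B v2 v1 = B v1 v2 := hsymm v2 v1
  have s13 : B v3 v1 = B v1 v3 := hsymm v3 v1
  have s23 : B v3 v2 = B v2 v3 := hsymm v3 v2
  beta_reduce
  rw [e1, e2, e3, e0]
  simp only [hQ, map_add, map_smul, LinearMap.add_apply,
    LinearMap.smul_apply, smul_eq_mul]
  rw [s01, s02, s03, s12, s13, s23]
  linear_combination ((B v0 v0 + B v1 v1 + B v2 v2 + B v3 v3) / 4) * hn
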